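/- arXiv:2005.02350 — 2 statements merged into one kernel-verified Lean document; each statement's English description precedes it below -/
import Mathlib

section
/- Let I be a finite type, ψ : I → ℂ an arbitrary vector, and γ the matrix indexed by I with entries γ(y,y') = ψ(y)·conj(ψ(y')). Let A be any complex matrix indexed by I × I, and define the contracted matrix A^{γ̄} indexed by I by A^{γ̄}(x,x') = Σ_{y,y'} A((x,y),(x',y'))·conj(γ(y,y')). Then, with ⊗ₖ the Kronecker product of matrices and 1 the identity matrix indexed by I, the following identity holds between matrices indexed by I × I: (1 ⊗ₖ γ) · A · (1 ⊗ₖ γ) = (1 ⊗ₖ γ) · (A^{γ̄} ⊗ₖ 1). -/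
open Kronecker

/-- The contraction of a two-particle kernel `A` against a one-particle matrix `η`:
`A^{η̄}(x,x') = Σ_{y,y'} A((x,y),(x',y'))·conj(η(y,y'))`. -/
noncomputable def contractKernel {I : Type*} [Fintype I]
    (A : Matrix (I × I) (I × I) ℂ) (η : Matrix I I ℂ) : Matrix I I ℂ :=
  Matrix.of fun x x' => ∑ y : I, ∑ y' : I, A (x, y) (x', y') * starRingEnd ℂ (η y y')

/-- **The key cancellation formula (equation (22) of the paper).**
For an arbitrary vector `ψ : I → ℂ` with rank-one matrix `γ(y,y') = ψ(y)·conj(ψ(y'))`, and an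
arbitrary complex matrix `A` indexed by `I × I`, compressing `A` by `γ` in the second variable
replaces `A` by the mean-field operator `A^{γ̄}` acting on the first variable:
`(1 ⊗ₖ γ) · A · (1 ⊗ₖ γ) = (1 ⊗ₖ γ) · (A^{γ̄} ⊗ₖ 1)`. -/
theorem rank_one_compression_cancellation
    {I : Type*} [Fintype I] [DecidableEq I]
    (ψ : I → ℂ) (A : Matrix (I × I) (I × I) ℂ)
    (γ : Matrix I I ℂ) (hγ : γ = Matrix.of fun y y' => ψ y * starRingEnd ℂ (ψ y')) :
    ((1 : Matrix I I ℂ) ⊗ₖ γ) * A * ((1 : Matrix I I ℂ) ⊗ₖ γ)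
      = ((1 : Matrix I I ℂ) ⊗ₖ γ) * ((contractKernel A γ) ⊗ₖ (1 : Matrix I I ℂ)) := by
  subst hγ
  ext ⟨x, y⟩ ⟨x', y'⟩
  simp only [Matrix.mul_apply, Matrix.kroneckerMap_apply, Matrix.one_apply, contractKernel,
    Matrix.of_apply, Fintype.sum_prod_type, ite_mul, one_mul, zero_mul, mul_ite, mul_one,
    mul_zero, Finset.sum_ite_eq, Finset.sum_ite_eq', Finset.mem_univ, if_true]
  simp only [Finset.sum_ite_irrel, Finset.sum_const_zero,
    Finset.sum_ite_eq, Finset.sum_ite_eq', Finset.mem_univ, if_true, ite_mul,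
    zero_mul, mul_ite, mul_zero, Finset.sum_mul, Finset.mul_sum, map_mul, RingHom.id_apply,
    Complex.conj_conj]
  rw [Finset.sum_comm]
  refine Finset.sum_congr rfl fun b _ => Finset.sum_congr rfl fun d _ => ?_
  ring
end

section
/- Let I be a finite type, A a complex matrix indexed by I × I, and η a complex matrix indexed by I. Define A^{η̄}(x,x') = Σ_{y,y'} A((x,y),(x',y'))·conj(η(y,y')). Then for every vector v : I → ℂ one has ‖A^{η̄}·v‖ ≤ ‖A‖_HS · ‖η‖_HS · ‖v‖, where ‖·‖ is the ℓ²-norm on (I → ℂ) and ‖M‖_HS denotes the Frobenius (Hilbert–Schmidt) norm of a matrix M, i.e. the square root of the sum of squared absolute values of its entries. In particular, the ℓ²-operator norm of A^{η̄} is at most ‖A‖_HS·‖η‖_HS. -/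
/-- The Frobenius (Hilbert–Schmidt) norm of a complex matrix: the square root of the sum of
the squared absolute values of all its entries. -/
noncomputable def hsNorm {m n : Type*} [Fintype m] [Fintype n] (M : Matrix m n ℂ) : ℝ :=
  Real.sqrt (∑ i : m, ∑ j : n, Complex.normSq (M i j))

/-- The ℓ²-norm of a vector `v : I → ℂ`. -/
noncomputable def l2Norm {I : Type*} [Fintype I] (v : I → ℂ) : ℝ :=
  Real.sqrt (∑ x : I, Complex.normSq (v x))


/-- Cauchy–Schwarz for finite complex sums, in `normSq` form. -/
lemma cs_normSq {J : Type*} [Fintype J] (f g : J → ℂ) :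
    Complex.normSq (∑ i, f i * g i) ≤
      (∑ i, Complex.normSq (f i)) * (∑ i, Complex.normSq (g i)) := by
  have h1 : ‖∑ i, f i * g i‖ ≤ ∑ i, ‖f i‖ * ‖g i‖ := by
    refine (norm_sum_le _ _).trans_eq ?_
    simp [norm_mul]
  calc Complex.normSq (∑ i, f i * g i) = ‖∑ i, f i * g i‖ ^ 2 :=
        (Complex.sq_norm _).symm
    _ ≤ (∑ i, ‖f i‖ * ‖g i‖) ^ 2 := by
        apply pow_le_pow_left₀ (norm_nonneg _) h1
    _ ≤ (∑ i, ‖f i‖ ^ 2) * (∑ i, ‖g i‖ ^ 2) :=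
        Finset.sum_mul_sq_le_sq_mul_sq _ _ _
    _ = _ := by simp [Complex.sq_norm]

/-- **Cauchy–Schwarz bound on the mean-field operator.**
For a two-particle kernel `A` and a one-particle matrix `η`, the contracted matrix `A^{η̄}`
satisfies `‖A^{η̄}·v‖ ≤ ‖A‖_HS·‖η‖_HS·‖v‖` for every vector `v`; in particular its
ℓ²-operator norm is at most `‖A‖_HS·‖η‖_HS`. -/
theorem contractKernel_opNorm_le
    {I : Type*} [Fintype I]
    (A : Matrix (I × I) (I × I) ℂ) (η : Matrix I I ℂ) (v : I → ℂ) :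
    l2Norm ((contractKernel A η).mulVec v) ≤ hsNorm A * hsNorm η * l2Norm v := by
  classical
  have hA : (0:ℝ) ≤ ∑ p : I × I, ∑ q : I × I, Complex.normSq (A p q) :=
    Finset.sum_nonneg fun _ _ => Finset.sum_nonneg fun _ _ => Complex.normSq_nonneg _
  have hAη : (0:ℝ) ≤ (∑ p : I × I, ∑ q : I × I, Complex.normSq (A p q)) *
      (∑ y : I, ∑ y' : I, Complex.normSq (η y y')) :=
    mul_nonneg hA (Finset.sum_nonneg fun _ _ => Finset.sum_nonneg fun _ _ => Complex.normSq_nonneg _)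
  rw [l2Norm, hsNorm, hsNorm, l2Norm, ← Real.sqrt_mul hA, ← Real.sqrt_mul hAη]
  apply Real.sqrt_le_sqrt
  set Sη : ℝ := ∑ y : I, ∑ y' : I, Complex.normSq (η y y') with hSη
  set Sv : ℝ := ∑ x : I, Complex.normSq (v x) with hSv
  -- entrywise bound on the contracted kernel
  have hentry : ∀ x x' : I, Complex.normSq (contractKernel A η x x') ≤
      (∑ y : I, ∑ y' : I, Complex.normSq (A (x, y) (x', y'))) * Sη := by
    intro x x'
    have : contractKernel A η x x' =
        ∑ p : I × I, A (x, p.1) (x', p.2) * starRingEnd ℂ (η p.1 p.2) := by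
      simp [contractKernel, Fintype.sum_prod_type]
    rw [this]
    refine (cs_normSq _ _).trans_eq ?_
    simp [Fintype.sum_prod_type, hSη]
  calc ∑ x : I, Complex.normSq ((contractKernel A η).mulVec v x)
      ≤ ∑ x : I, (∑ x' : I, Complex.normSq (contractKernel A η x x')) * Sv := by
        refine Finset.sum_le_sum fun x _ => ?_
        exact cs_normSq (fun x' => contractKernel A η x x') v
    _ ≤ ∑ x : I, ((∑ x' : I, (∑ y : I, ∑ y' : I, Complex.normSq (A (x, y) (x', y'))) * Sη)) * Sv := by
        refine Finset.sum_le_sum fun x _ => ?_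
        have hSv : (0:ℝ) ≤ Sv := Finset.sum_nonneg fun _ _ => Complex.normSq_nonneg _
        refine mul_le_mul_of_nonneg_right ?_ hSv
        exact Finset.sum_le_sum fun x' _ => hentry x x'
    _ = (∑ p : I × I, ∑ q : I × I, Complex.normSq (A p q)) * Sη * Sv := by
        simp only [← Finset.sum_mul]
        congr 2
        rw [Fintype.sum_prod_type]
        refine Finset.sum_congr rfl fun x _ => ?_
        rw [Finset.sum_comm]
        refine Finset.sum_congr rfl fun y _ => ?_
        rw [Fintype.sum_prod_type]
end
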